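/- Let an instance have a set N of agents and a set U of chores with identically ordered monotone normalized costs, with ordering a_1,…,a_{|U|} (lower index means higher marginal cost). Let Δ ∈ ℤ≥0 and let Q = (Q_i)_{i∈N} be a multi-allocation whose characteristic vector satisfies Σ_{a∈S} χ^Q_a ≥ |S| − Δ for every chore sequence S = {a_r, a_{r+1},…,a_s} (1 ≤ r ≤ s ≤ |U|). Then there exists a multi-allocation A' = (A'_i)_{i∈N} such that (i) c_i(A'_i) ≤ c_i(Q_i) for every agent i ∈ N, and (ii) the number of unassigned chores under A' is at most Δ. -/

import Mathlib

open Finset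

/-- Exchange lemma: if `T` prefix-dominates... i.e. every prefix of `T` has at most as
many elements as the corresponding prefix of `S`, then `c (T.image a) ≤ c (S.image a)`. -/
lemma cost_exchange {u : ℕ} (c : Finset (Fin u) → NNReal)
    (hmono : ∀ S T : Finset (Fin u), S ⊆ T → c S ≤ c T)
    (a : Fin u ≃ Fin u)
    (hord : ∀ s t : Fin u, s < t → ∀ S : Finset (Fin u),
      a s ∉ S → a t ∉ S → c (insert (a t) S) ≤ c (insert (a s) S)) :
    ∀ (n : ℕ) (S T : Finset (Fin u)),
      (∑ x ∈ S, (u - (x : ℕ))) ≤ n →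
      (∀ j : Fin u, ((T.filter fun x => x ≤ j).card ≤ (S.filter fun x => x ≤ j).card)) →
      c (T.image a) ≤ c (S.image a) := by
  intro n
  induction n with
  | zero =>
    intro S T hμ hdom
    have hS : S = ∅ := by
      by_contra h
      obtain ⟨s, hs⟩ := nonempty_iff_ne_empty.mpr h
      have h1 : 1 ≤ u - (s : ℕ) := by have := s.isLt; omega
      have h2 : u - (s : ℕ) ≤ ∑ x ∈ S, (u - (x : ℕ)) :=
        Finset.single_le_sum (f := fun x : Fin u => u - (x : ℕ)) (fun _ _ => Nat.zero_le _) hs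
      omega
    subst hS
    have hT : T = ∅ := by
      by_contra h
      obtain ⟨t, ht⟩ := nonempty_iff_ne_empty.mpr h
      have h1 := hdom t
      have h2 : t ∈ T.filter (fun x => x ≤ t) := mem_filter.mpr ⟨ht, le_refl _⟩
      have h3 : 1 ≤ (T.filter (fun x => x ≤ t)).card := card_pos.mpr ⟨t, h2⟩
      simp only [filter_empty, card_empty] at h1
      omega
    subst hT
    exact le_refl _
  | succ n ih =>
    intro S T hμ hdom
    by_cases hTS : T ⊆ S
    · exact hmono _ _ (Finset.image_subset_image hTS)
    · have hne : (T \ S).Nonempty := by rwa [sdiff_nonempty]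
      set t := (T \ S).min' hne with ht_def
      have htmem := (T \ S).min'_mem hne
      have htT : t ∈ T := (mem_sdiff.mp htmem).1
      have htS : t ∉ S := (mem_sdiff.mp htmem).2
      have hmin : ∀ x ∈ T, x < t → x ∈ S := by
        intro x hx hlt
        by_contra hxS
        exact absurd ((T \ S).min'_le x (mem_sdiff.mpr ⟨hx, hxS⟩)) (not_le.mpr hlt)
      have hEs : ∃ s ∈ S, s ∉ T ∧ s < t := by
        by_contra hE
        push_neg at hE
        have hsub : S.filter (fun x => x ≤ t) ⊆ (T.filter (fun x => x ≤ t)).erase t := by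
          intro x hx
          obtain ⟨hxS, hxt⟩ := mem_filter.mp hx
          have hxlt : x < t := lt_of_le_of_ne hxt (by rintro rfl; exact htS hxS)
          have hxT : x ∈ T := by
            by_contra hxT
            exact absurd hxlt (not_lt.mpr (hE x hxS hxT))
          exact mem_erase.mpr ⟨ne_of_lt hxlt, mem_filter.mpr ⟨hxT, hxt⟩⟩
        have h1 := card_le_card hsub
        have h2 : ((T.filter (fun x => x ≤ t)).erase t).card
            = (T.filter (fun x => x ≤ t)).card - 1 :=
          card_erase_of_mem (mem_filter.mpr ⟨htT, le_refl _⟩)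
        have h3 := hdom t
        have h4 : 1 ≤ (T.filter (fun x => x ≤ t)).card :=
          card_pos.mpr ⟨t, mem_filter.mpr ⟨htT, le_refl _⟩⟩
        omega
      obtain ⟨s, hsS, hsT, hst⟩ := hEs
      set S' := insert t (S.erase s) with hS'
      have htnotin : t ∉ S.erase s := fun hc => htS (mem_of_mem_erase hc)
      have hμ' : (∑ x ∈ S', (u - (x : ℕ))) ≤ n := by
        rw [hS', sum_insert htnotin]
        have he : (u - (s : ℕ)) + ∑ x ∈ S.erase s, (u - (x : ℕ)) = ∑ x ∈ S, (u - (x : ℕ)) :=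
          Finset.add_sum_erase S (fun x : Fin u => u - (x : ℕ)) hsS
        have h5 : (u - (t : ℕ)) < (u - (s : ℕ)) := by
          have h6 := t.isLt
          have h7 : (s : ℕ) < (t : ℕ) := hst
          omega
        omega
      have hdom' : ∀ j : Fin u, (T.filter fun x => x ≤ j).card ≤ (S'.filter fun x => x ≤ j).card := by
        intro j
        by_cases hjt : t ≤ j
        · have heq : (S'.filter fun x => x ≤ j) = insert t ((S.filter fun x => x ≤ j).erase s) := by
            rw [hS', filter_insert, if_pos hjt, filter_erase]
          have hsj : s ∈ S.filter fun x => x ≤ j :=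
            mem_filter.mpr ⟨hsS, le_trans (le_of_lt hst) hjt⟩
          rw [heq, card_insert_of_notMem
              (fun hc => htS (mem_filter.mp (mem_of_mem_erase hc)).1),
            card_erase_of_mem hsj]
          have h1 := hdom j
          have h2 : 1 ≤ (S.filter fun x => x ≤ j).card := card_pos.mpr ⟨s, hsj⟩
          omega
        · by_cases hjs : s ≤ j
          · have hsub : T.filter (fun x => x ≤ j) ⊆ (S.filter fun x => x ≤ j).erase s := by
              intro x hx
              obtain ⟨hxT, hxj⟩ := mem_filter.mp hx
              have hxlt : x < t := lt_of_le_of_lt hxj (not_le.mp hjt)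
              exact mem_erase.mpr ⟨fun hc => hsT (hc ▸ hxT),
                mem_filter.mpr ⟨hmin x hxT hxlt, hxj⟩⟩
            have heq : (S'.filter fun x => x ≤ j) = (S.filter fun x => x ≤ j).erase s := by
              rw [hS', filter_insert, if_neg hjt, filter_erase]
            rw [heq]
            exact card_le_card hsub
          · have heq : (S'.filter fun x => x ≤ j) = (S.filter fun x => x ≤ j) := by
              rw [hS', filter_insert, if_neg hjt, filter_erase]
              have hns : s ∉ S.filter (fun x => x ≤ j) := fun hc => hjs (mem_filter.mp hc).2
              rw [erase_eq_of_notMem hns]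
            rw [heq]
            exact hdom j
      have hstep : c (S'.image a) ≤ c (S.image a) := by
        have hSi : S.image a = insert (a s) ((S.erase s).image a) := by
          conv_lhs => rw [← insert_erase hsS]
          rw [image_insert]
        have hS'i : S'.image a = insert (a t) ((S.erase s).image a) := by
          rw [hS', image_insert]
        rw [hSi, hS'i]
        apply hord s t hst
        · intro hc
          obtain ⟨y, hy, hay⟩ := mem_image.mp hc
          have hys := a.injective hay
          exact (notMem_erase s S) (hys ▸ hy)
        · intro hc
          obtain ⟨y, hy, hay⟩ := mem_image.mp hc
          have hyt := a.injective hay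
          exact htnotin (hyt ▸ hy)
      exact le_trans (ih S' T hμ' hdom') hstep

variable {N u : ℕ}

noncomputable def greedyStep (P B : Fin N → Finset (Fin u)) (pos : Fin u) :
    Fin N → Finset (Fin u) :=
  if h : ∃ i, (B i).card < ((P i).filter (fun x => x ≤ pos)).card then
    Function.update B h.choose (insert pos (B h.choose))
  else B

noncomputable def greedy (P : Fin N → Finset (Fin u)) : ℕ → Fin N → Finset (Fin u)
  | 0 => fun _ => ∅
  | (k + 1) => if h : k < u then greedyStep P (greedy P k) ⟨k, h⟩ else greedy P k

lemma sum_card_update {N u : ℕ} (B : Fin N → Finset (Fin u)) (i0 : Fin N) (b : Finset (Fin u)) :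
    ∑ x, (Function.update B i0 b x).card = b.card + ∑ x ∈ univ.erase i0, (B x).card := by
  rw [← Finset.add_sum_erase univ (fun x => (Function.update B i0 b x).card) (mem_univ i0)]
  congr 1
  · rw [Function.update_self]
  · apply Finset.sum_congr rfl
    intro x hx
    rw [Function.update_of_ne (ne_of_mem_erase hx)]

lemma greedy_lt (P : Fin N → Finset (Fin u)) :
    ∀ k i x, x ∈ greedy P k i → (x : ℕ) < k := by
  intro k
  induction k with
  | zero => simp [greedy]
  | succ k ih =>
    intro i x hx
    by_cases h : k < u
    · simp only [greedy, dif_pos h] at hx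
      unfold greedyStep at hx
      split at hx
      · rename_i hex
        by_cases hi : i = hex.choose
        · subst hi
          rw [Function.update_self] at hx
          rcases mem_insert.mp hx with h1 | h1
          · simp [h1]
          · have := ih _ _ h1; omega
        · rw [Function.update_of_ne hi] at hx
          have := ih _ _ hx; omega
      · have := ih _ _ hx; omega
    · simp only [greedy, dif_neg h] at hx
      have := ih _ _ hx; omega

lemma greedy_dom (P : Fin N → Finset (Fin u)) :
    ∀ k i (j : Fin u), ((greedy P k i).filter (fun x => x ≤ j)).card
      ≤ ((P i).filter (fun x => x ≤ j)).card := by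
  intro k
  induction k with
  | zero => simp [greedy]
  | succ k ih =>
    intro i j
    by_cases h : k < u
    · simp only [greedy, dif_pos h]
      unfold greedyStep
      split
      · rename_i hex
        set pos : Fin u := ⟨k, h⟩ with hpos
        by_cases hi : i = hex.choose
        · subst hi
          rw [Function.update_self]
          have hfresh : pos ∉ greedy P k hex.choose := fun hc => by
            have := greedy_lt P k _ _ hc
            simp [hpos] at this
          by_cases hj : pos ≤ j
          · rw [filter_insert, if_pos hj,
              card_insert_of_notMem (fun hc => hfresh (mem_filter.mp hc).1)]
            have hall : (greedy P k hex.choose).filter (fun x => x ≤ j) = greedy P k hex.choose := by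
              apply filter_true_of_mem
              intro x hxmem
              have h1 := greedy_lt P k _ _ hxmem
              have h2 : (x : ℕ) ≤ (j : ℕ) := by
                have : (pos : ℕ) ≤ (j : ℕ) := hj
                simp [hpos] at this
                omega
              exact h2
            rw [hall]
            have h1 : (greedy P k hex.choose).card
                < ((P hex.choose).filter (fun x => x ≤ pos)).card := hex.choose_spec
            have h2 : ((P hex.choose).filter (fun x => x ≤ pos)).card
                ≤ ((P hex.choose).filter (fun x => x ≤ j)).card := by
              apply card_le_card
              intro x hx
              obtain ⟨hx1, hx2⟩ := mem_filter.mp hx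
              exact mem_filter.mpr ⟨hx1, le_trans hx2 hj⟩
            omega
          · rw [filter_insert, if_neg hj]
            exact ih _ j
        · rw [Function.update_of_ne hi]
          exact ih i j
      · exact ih i j
    · simp only [greedy, dif_neg h]
      exact ih i j

lemma greedy_cover (P : Fin N → Finset (Fin u)) :
    ∀ k, (univ.filter (fun x : Fin u => ∃ i, x ∈ greedy P k i)).card
      = ∑ i, (greedy P k i).card := by
  intro k
  induction k with
  | zero => simp [greedy]
  | succ k ih =>
    by_cases h : k < u
    · simp only [greedy, dif_pos h]
      unfold greedyStep
      split
      · rename_i hex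
        set pos : Fin u := ⟨k, h⟩ with hpos
        set i0 := hex.choose with hi0
        have hfresh : ∀ i, pos ∉ greedy P k i := fun i hc => by
          have := greedy_lt P k _ _ hc
          simp [hpos] at this
        have hset : univ.filter (fun x : Fin u =>
              ∃ i, x ∈ Function.update (greedy P k) i0 (insert pos (greedy P k i0)) i)
            = insert pos (univ.filter (fun x : Fin u => ∃ i, x ∈ greedy P k i)) := by
          ext x
          simp only [mem_filter, mem_univ, true_and, mem_insert]
          constructor
          · rintro ⟨i, hxi⟩
            by_cases hii : i = i0
            · subst hii
              rw [Function.update_self] at hxi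
              rcases mem_insert.mp hxi with h1 | h1
              · exact Or.inl h1
              · exact Or.inr ⟨i0, h1⟩
            · rw [Function.update_of_ne hii] at hxi
              exact Or.inr ⟨i, hxi⟩
          · rintro (rfl | ⟨i, hxi⟩)
            · exact ⟨i0, by rw [Function.update_self]; exact mem_insert_self _ _⟩
            · by_cases hii : i = i0
              · subst hii
                exact ⟨i0, by rw [Function.update_self]; exact mem_insert_of_mem hxi⟩
              · exact ⟨i, by rw [Function.update_of_ne hii]; exact hxi⟩
        rw [hset, card_insert_of_notMem (by
          intro hc
          exact hfresh _ ((mem_filter.mp hc).2.choose_spec)), ih]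
        rw [sum_card_update, card_insert_of_notMem (hfresh i0)]
        have h9 := Finset.add_sum_erase univ (fun i => (greedy P k i).card) (mem_univ i0)
        omega
      · exact ih
    · simp only [greedy, dif_neg h]
      exact ih

lemma greedy_count (P : Fin N → Finset (Fin u)) (Δ : ℕ)
    (hf : ∀ j : Fin u, (j : ℕ) + 1 ≤ (∑ i, ((P i).filter (fun x => x ≤ j)).card) + Δ) :
    ∀ k, k ≤ u → k ≤ (∑ i, (greedy P k i).card) + Δ := by
  intro k
  induction k with
  | zero => omega
  | succ k ih =>
    intro hk
    have h : k < u := hk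
    simp only [greedy, dif_pos h]
    unfold greedyStep
    split
    · rename_i hex
      set pos : Fin u := ⟨k, h⟩ with hpos
      set i0 := hex.choose with hi0
      have hfresh : pos ∉ greedy P k i0 := fun hc => by
        have := greedy_lt P k _ _ hc
        simp [hpos] at this
      rw [sum_card_update, card_insert_of_notMem hfresh]
      have h9 := Finset.add_sum_erase univ (fun i => (greedy P k i).card) (mem_univ i0)
      have hih := ih (by omega)
      omega
    · rename_i hno
      push_neg at hno
      have hsum : (∑ i, ((P i).filter (fun x => x ≤ (⟨k, h⟩ : Fin u))).card)
          ≤ ∑ i, (greedy P k i).card :=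
        Finset.sum_le_sum (fun i _ => hno i)
      have := hf ⟨k, h⟩
      simp only at this
      omega


/-- copy redistribution for chores: in a chores instance with agent
set `[N]`, chore set `[u]`, and identically ordered monotone normalized costs with
ordering `a` (lower index = higher marginal cost), if `Q` is a multi-allocation
such that every contiguous chore sequence `S = {a_r,…,a_s}` satisfies
`Σ_{x∈S} χ^Q_x ≥ |S| − Δ`, then there is a multi-allocation `A'` with
`c_i(A'_i) ≤ c_i(Q_i)` for every agent `i` and at most `Δ` unassigned chores. -/
theorem copy_redistribution_chores
    (N u : ℕ)
    (c : Fin N → Finset (Fin u) → NNReal)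
    (hmono : ∀ i, ∀ S T : Finset (Fin u), S ⊆ T → c i S ≤ c i T)
    (hnorm : ∀ i, c i ∅ = 0)
    (a : Fin u ≃ Fin u)
    (hord : ∀ s t : Fin u, s < t → ∀ i, ∀ S : Finset (Fin u),
      a s ∉ S → a t ∉ S → c i (insert (a t) S) ≤ c i (insert (a s) S))
    (Δ : ℕ) (Q : Fin N → Finset (Fin u))
    (hQ : ∀ r s : Fin u, r ≤ s →
      ((((Finset.univ.filter (fun k : Fin u => r ≤ k ∧ k ≤ s)).image a).card : ℤ)
          - (Δ : ℤ))
        ≤ ∑ x ∈ (Finset.univ.filter (fun k : Fin u => r ≤ k ∧ k ≤ s)).image a,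
            ((Finset.univ.filter (fun i => x ∈ Q i)).card : ℤ)) :
    ∃ A' : Fin N → Finset (Fin u),
      (∀ i, c i (A' i) ≤ c i (Q i)) ∧
      (Finset.univ.filter (fun x : Fin u => ∀ i, x ∉ A' i)).card ≤ Δ := by
  classical
  set P : Fin N → Finset (Fin u) := fun i => univ.filter (fun k => a k ∈ Q i) with hP
  have hf : ∀ j : Fin u, (j : ℕ) + 1 ≤ (∑ i, ((P i).filter (fun x => x ≤ j)).card) + Δ := by
    intro j
    have h0 : (0 : ℕ) < u := j.pos
    have hrj : (⟨0, h0⟩ : Fin u) ≤ j := Fin.le_def.mpr (Nat.zero_le _)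
    have hQ' := hQ ⟨0, h0⟩ j hrj
    have hI : (univ.filter (fun k : Fin u => (⟨0, h0⟩ : Fin u) ≤ k ∧ k ≤ j))
        = univ.filter (fun k => k ≤ j) := by
      ext x
      simp only [mem_filter, mem_univ, true_and]
      exact and_iff_right (Fin.le_def.mpr (Nat.zero_le _))
    rw [hI] at hQ'
    rw [Finset.card_image_of_injective _ a.injective] at hQ'
    rw [Finset.sum_image (fun x _ y _ h => a.injective h)] at hQ'
    have hcard : (univ.filter (fun k : Fin u => k ≤ j)).card = (j : ℕ) + 1 := by
      have heq : univ.filter (fun k : Fin u => k ≤ j) = Iic j := by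
        ext x; simp
      rw [heq]
      simp [Nat.card_Iic]
    rw [hcard] at hQ'
    -- swap the double sum
    have hswap : ∑ k ∈ univ.filter (fun k : Fin u => k ≤ j),
          ((univ.filter (fun i => a k ∈ Q i)).card)
        = ∑ i, ((P i).filter (fun x => x ≤ j)).card := by
      have hPe : ∀ i, (P i).filter (fun x => x ≤ j)
          = (univ.filter (fun k : Fin u => k ≤ j)).filter (fun k => a k ∈ Q i) := by
        intro i
        ext x
        simp [hP]
        tauto
      simp only [hPe, Finset.card_filter]
      rw [Finset.sum_comm]
    have hcast : (∑ x ∈ univ.filter (fun k : Fin u => k ≤ j),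
          ((univ.filter (fun i => a x ∈ Q i)).card : ℤ))
        = ((∑ k ∈ univ.filter (fun k : Fin u => k ≤ j),
          ((univ.filter (fun i => a k ∈ Q i)).card) : ℕ) : ℤ) := by
      push_cast
      rfl
    rw [hcast, hswap] at hQ'
    omega
  refine ⟨fun i => (greedy P u i).image a, ?_, ?_⟩
  · intro i
    have hQi : (P i).image a = Q i := by
      ext x
      simp only [hP, mem_image, mem_filter, mem_univ, true_and]
      constructor
      · rintro ⟨k, hk, rfl⟩; exact hk
      · intro hx; exact ⟨a.symm x, by simpa using hx, a.apply_symm_apply x⟩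
    calc c i ((greedy P u i).image a)
        ≤ c i ((P i).image a) :=
          cost_exchange (c i) (hmono i) a (fun s t h => hord s t h i)
            (∑ x ∈ P i, (u - (x : ℕ))) (P i) _ le_rfl (greedy_dom P u i)
      _ = c i (Q i) := by rw [hQi]
  · have hbij : univ.filter (fun x : Fin u => ∀ i, x ∉ (greedy P u i).image a)
        = (univ.filter (fun y : Fin u => ∀ i, y ∉ greedy P u i)).image a := by
      ext x
      simp only [mem_filter, mem_univ, true_and, mem_image]
      constructor
      · intro hx
        refine ⟨a.symm x, ⟨?_, a.apply_symm_apply x⟩⟩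
        intro i hc
        exact hx i ⟨a.symm x, hc, a.apply_symm_apply x⟩
      · rintro ⟨y, hy, rfl⟩
        intro i hc
        obtain ⟨z, hz, haz⟩ := hc
        have := a.injective haz
        exact hy i (this ▸ hz)
    rw [hbij, Finset.card_image_of_injective _ a.injective]
    have hcov := greedy_cover P u
    have hcnt := greedy_count P Δ hf u le_rfl
    have hsplit : (univ.filter (fun y : Fin u => ∃ i, y ∈ greedy P u i)).card
        + (univ.filter (fun y : Fin u => ¬∃ i, y ∈ greedy P u i)).card = u := by
      rw [Finset.card_filter_add_card_filter_not]
      simp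
    have hpred : (univ.filter (fun y : Fin u => ∀ i, y ∉ greedy P u i))
        = (univ.filter (fun y : Fin u => ¬∃ i, y ∈ greedy P u i)) := by
      ext y
      simp
    rw [hpred]
    omega
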